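/- arXiv:1610.08464 — 3 statements merged into one kernel-verified Lean document; each statement's English description precedes it below -/
import Mathlib

section
/- Let G be a group that is linear over a field of positive characteristic (i.e., G embeds in GL(d,F) for some d and some field F with char F > 0), and let g ∈ G be an element of infinite order. Then the image of g in the abelianization of the centralizer C_G(g) has infinite order. -/
open Module Polynomial Set

section aux

variable {K : Type*} [Field K] {p : ℕ} [CharP K p] [Fact p.Prime]

lemma aux_pow_eq_one {x : K} {k : ℕ} (h : x ^ p ^ k = 1) : x = 1 := by
  have h2 : (x - 1) ^ p ^ k = 0 := by
    rw [sub_pow_char_pow, h, one_pow, sub_self]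
  have h3 : x - 1 = 0 := by
    have hpk : p ^ k ≠ 0 := pow_ne_zero _ (Fact.out (p := p.Prime)).ne_zero
    exact pow_eq_zero_iff hpk |>.mp h2
  exact sub_eq_zero.mp h3

end aux

section aux2

variable {K : Type*} [Field K] {V : Type*} [AddCommGroup V] [Module K V] [FiniteDimensional K V]

lemma det_one_add_nilpotent (p : ℕ) [CharP K p] [Fact p.Prime] [Nontrivial V]
    (ν : V →ₗ[K] V) (hν : IsNilpotent ν) :
    LinearMap.det (1 + ν) = 1 := by
  haveI : CharP (Module.End K V) p := charP_of_injective_algebraMap' K p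
  obtain ⟨k, hk⟩ := hν
  have hk' : k ≤ p ^ k := (Nat.lt_pow_self (n := k) (Fact.out (p := p.Prime)).one_lt).le
  have hν2 : ν ^ p ^ k = 0 := by
    rw [← Nat.add_sub_cancel' hk', pow_add, hk, zero_mul]
  have h1 : (1 + ν) ^ p ^ k = 1 := by
    rw [add_pow_char_pow_of_commute _ _ (Commute.one_left ν), one_pow, hν2, add_zero]
  apply aux_pow_eq_one (p := p) (k := k)
  have h2 := congrArg LinearMap.det h1
  rw [map_pow, map_one] at h2
  exact h2

end aux2

set_option maxHeartbeats 2000000 in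
theorem stmt_8 (G : Type*) [Group G] (F : Type*) [Field F] (p : ℕ) [CharP F p]
    (hp : 0 < p) (d : ℕ) (ρ : G →* GL (Fin d) F) (hρ : Function.Injective ρ)
    (g : G) (hg : ¬ IsOfFinOrder g)
    (hmem : g ∈ Subgroup.centralizer ({g} : Set G)) :
    ¬ IsOfFinOrder (Abelianization.of
      (⟨g, hmem⟩ : Subgroup.centralizer ({g} : Set G))) := by
  intro hfin
  apply hg
  haveI : NeZero p := ⟨hp.ne'⟩
  haveI hppr : Fact p.Prime := CharP.char_is_prime_of_pos F p
  -- dispose of the trivial case d = 0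
  rcases Nat.eq_zero_or_pos d with hd | hd
  · subst hd
    have : g = 1 := hρ (Subsingleton.elim _ _)
    rw [this]; exact IsOfFinOrder.one
  haveI : Nonempty (Fin d) := ⟨⟨0, hd⟩⟩
  -- extract n from finite order in the abelianization
  set C := Subgroup.centralizer ({g} : Set G) with hC
  set x : C := ⟨g, hmem⟩ with hx
  obtain ⟨n, hn, hxn⟩ := isOfFinOrder_iff_pow_eq_one.mp hfin
  rw [← map_pow] at hxn
  have hcomm : x ^ n ∈ commutator C := (QuotientGroup.eq_one_iff _).mp hxn
  -- set up the linear algebra over the algebraic closure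
  set K := AlgebraicClosure F with hK
  set V := Fin d → K with hV
  let r : Matrix (Fin d) (Fin d) F →+* Module.End K V :=
    (Matrix.toLinAlgEquiv' : Matrix (Fin d) (Fin d) K ≃ₐ[K] _).toRingEquiv.toRingHom.comp
      ((algebraMap F K).mapMatrix)
  have hr : Function.Injective r :=
    fun a b h => Matrix.map_injective (algebraMap F K).injective ((AlgEquiv.injective (Matrix.toLinAlgEquiv' : Matrix (Fin d) (Fin d) K ≃ₐ[K] _)) h)
  let Φ : G →* (Module.End K V)ˣ := (Units.map r.toMonoidHom).comp ρ
  have hΦ : Function.Injective Φ := by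
    intro a b hab
    apply hρ
    apply Units.ext
    exact hr (congrArg Units.val hab)
  set f : Module.End K V := ↑(Φ g) with hf
  set D := finrank K V with hD
  -- maps-to facts
  have hWmap : ∀ (h : C) (μ : K),
      MapsTo (↑(Φ (h : G)) : Module.End K V) (f.maxGenEigenspace μ) (f.maxGenEigenspace μ) := by
    intro h μ
    apply Module.End.mapsTo_maxGenEigenspace_of_comm
    have hgh : g * (h : G) = (h : G) * g := h.2 g rfl
    have h2 : Φ g * Φ h = Φ h * Φ g := by rw [← map_mul, ← map_mul, hgh]
    exact congrArg Units.val h2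
  set N := (n * d).factorial with hN
  have hNpos : 0 < N := Nat.factorial_pos _
  -- key claim
  have key : ∀ μ : K, ∀ v ∈ f.maxGenEigenspace μ, ((f ^ N - 1) ^ D) v = 0 := by
    intro μ
    by_cases hμbot : f.maxGenEigenspace μ = ⊥
    · intro v hv
      rw [hμbot, Submodule.mem_bot] at hv
      rw [hv, map_zero]
    -- W is a nontrivial invariant subspace
    set W := f.maxGenEigenspace μ with hW
    haveI : Nontrivial W := Submodule.nontrivial_iff_ne_bot.mpr hμbot
    have hm : 0 < finrank K W := finrank_pos
    have hmle : finrank K W ≤ d := by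
      have h5 := Submodule.finrank_le W
      have h6 : finrank K V = d := Module.finrank_fin_fun K
      rw [h6] at h5
      exact h5
    -- v ∈ W means (f - μ•1)^D v = 0
    have hker : ∀ v ∈ W, ((f - μ • 1) ^ D) v = 0 := by
      intro v hv
      rw [hW, f.maxGenEigenspace_eq_genEigenspace_finrank, Module.End.mem_genEigenspace_nat,
        LinearMap.mem_ker] at hv
      exact hv
    -- μ ≠ 0
    have hμ0 : μ ≠ 0 := by
      intro h0
      obtain ⟨v, hv, hv0⟩ := Submodule.exists_mem_ne_zero_of_ne_bot hμbot
      apply hv0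
      have h1 := hker v hv
      rw [h0, zero_smul, sub_zero] at h1
      have h2 : (↑((Φ g) ^ D)⁻¹ * ↑((Φ g) ^ D) : Module.End K V) v = 0 := by
        rw [Module.End.mul_apply]
        have h3 : (↑((Φ g) ^ D) : Module.End K V) v = 0 := by
          rw [Units.val_pow_eq_pow_val]; exact h1
        rw [h3, map_zero]
      rwa [Units.inv_mul, Module.End.one_apply] at h2
    -- the determinant homomorphism on the centralizer
    let φ0 : C →* K :=
      { toFun := fun h => LinearMap.det ((↑(Φ (h : G)) : Module.End K V).restrict (hWmap h μ))
        map_one' := by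
          have h1 : ((↑(Φ ((1 : C) : G)) : Module.End K V).restrict (hWmap 1 μ)) = 1 := by
            refine LinearMap.ext fun v => Subtype.ext ?_
            simp [LinearMap.restrict_coe_apply]
          show LinearMap.det _ = 1
          rw [h1]
          exact map_one LinearMap.det
        map_mul' := by
          intro a b
          have h1 : ((↑(Φ ((a * b : C) : G)) : Module.End K V).restrict (hWmap (a * b) μ)) =
              ((↑(Φ (a : G)) : Module.End K V).restrict (hWmap a μ)) *
              ((↑(Φ (b : G)) : Module.End K V).restrict (hWmap b μ)) := by
            refine LinearMap.ext fun v => Subtype.ext ?_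
            simp [LinearMap.restrict_coe_apply, Module.End.mul_apply, map_mul, Units.val_mul]
            rfl
          show LinearMap.det _ = LinearMap.det _ * LinearMap.det _
          rw [h1]
          exact map_mul LinearMap.det _ _ }
    have hφ1 : φ0 (x ^ n) = 1 := by
      have h1 : x ^ n ∈ (φ0.toHomUnits).ker := Abelianization.commutator_subset_ker _ hcomm
      have h2 : φ0.toHomUnits (x ^ n) = 1 := h1
      have h3 := congrArg Units.val h2
      rwa [MonoidHom.coe_toHomUnits] at h3
    -- det of restriction of f equals μ ^ m
    have hdet : φ0 x = μ ^ finrank K W := by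
      have hmapsto : MapsTo (f - μ • 1 : Module.End K V) W W := by
        intro v hv
        exact W.sub_mem (hWmap x μ hv) (W.smul_mem μ hv)
      set ν := (f - μ • 1 : Module.End K V).restrict hmapsto with hν
      have hνnil : IsNilpotent ν := by
        refine ⟨D, ?_⟩
        refine LinearMap.ext fun v => Subtype.ext ?_
        rw [hν, Module.End.pow_restrict D hmapsto, LinearMap.restrict_coe_apply]
        simpa using hker v v.2
      have hrest : (f.restrict (hWmap x μ)) = μ • (1 : Module.End K W) + ν := by
        refine LinearMap.ext fun v => Subtype.ext ?_
        simp only [LinearMap.restrict_coe_apply, LinearMap.add_apply, LinearMap.smul_apply,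
          Module.End.one_apply, Submodule.coe_add, SetLike.val_smul, hν,
          LinearMap.sub_apply]
        change f v = μ • (v : V) + (f v - μ • (v : V))
        module
      show LinearMap.det (f.restrict (hWmap x μ)) = μ ^ finrank K W
      rw [hrest]
      have h4 : μ • (1 : Module.End K W) + ν = μ • ((1 : Module.End K W) + μ⁻¹ • ν) := by
        rw [smul_add, smul_smul, mul_inv_cancel₀ hμ0, one_smul]
      rw [h4, LinearMap.det_smul]
      have h5 : LinearMap.det ((1 : Module.End K ↥W) + μ⁻¹ • ν) = 1 := by
        apply det_one_add_nilpotent p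
        obtain ⟨k, hk⟩ := hνnil
        exact ⟨k, by rw [_root_.smul_pow, hk, smul_zero]⟩
      rw [h5, mul_one]
    -- μ ^ N = 1
    have hμN : μ ^ N = 1 := by
      have h1 : μ ^ (finrank K W * n) = 1 := by
        rw [pow_mul, ← hdet, ← map_pow, hφ1]
      have hdvd : finrank K W * n ∣ N := by
        apply Nat.dvd_factorial (Nat.mul_pos hm hn)
        calc finrank K W * n ≤ d * n := Nat.mul_le_mul_right n hmle
        _ = n * d := Nat.mul_comm d n
      obtain ⟨c, hc⟩ := hdvd
      rw [hc, pow_mul, h1, one_pow]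
    -- factor X^N - 1
    have hdvdpoly : (X - Polynomial.C μ) ∣ (X ^ N - 1 : K[X]) := by
      apply dvd_iff_isRoot.mpr
      simp [IsRoot, hμN]
    obtain ⟨q, hq⟩ := hdvdpoly
    have h2 : aeval f (X - Polynomial.C μ) = f - μ • 1 := by
      simp [Module.algebraMap_end_eq_smul_id, Module.End.one_eq_id]
    have hfactor : (f ^ N - 1 : Module.End K V) = aeval f q * (f - μ • 1) := by
      have h1 : (f ^ N - 1 : Module.End K V) = aeval f (X ^ N - 1 : K[X]) := by
        simp
      rw [h1, hq, mul_comm, map_mul, h2]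
    have hcomm2 : Commute (aeval f q) (f - μ • 1 : Module.End K V) := by
      rw [← h2]
      show _ * _ = _ * _
      rw [← map_mul, ← map_mul, mul_comm]
    intro v hv
    rw [hfactor, hcomm2.mul_pow, Module.End.mul_apply, hker v hv, map_zero]
  -- conclude nilpotency of f^N - 1
  have hnil : ((f ^ N - 1 : Module.End K V) ^ D) = 0 := by
    apply LinearMap.ker_eq_top.mp
    apply top_le_iff.mp
    rw [← Module.End.iSup_maxGenEigenspace_eq_top f]
    apply iSup_le
    intro μ v hv
    exact key μ v hv
  haveI : CharP (Module.End K V) p := charP_of_injective_algebraMap' K p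
  have hDle : D ≤ p ^ D := (Nat.lt_pow_self (n := D) hppr.out.one_lt).le
  have hη : (f ^ N - 1 : Module.End K V) ^ p ^ D = 0 := by
    rw [← Nat.add_sub_cancel' hDle, pow_add, hnil, zero_mul]
  have hfpow : f ^ (N * p ^ D) = 1 := by
    have h1 : f ^ N = 1 + (f ^ N - 1) := by abel
    rw [pow_mul, h1, add_pow_char_pow_of_commute _ _ (Commute.one_left _), one_pow, hη, add_zero]
  have hu : Φ g ^ (N * p ^ D) = 1 := by
    apply Units.ext
    rw [Units.val_pow_eq_pow_val, Units.val_one]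
    exact hfpow
  have hg1 : g ^ (N * p ^ D) = 1 := by
    apply hΦ
    rw [map_pow, hu, map_one]
  exact isOfFinOrder_iff_pow_eq_one.mpr
    ⟨N * p ^ D, Nat.mul_pos hNpos (pow_pos hppr.out.pos D), hg1⟩
end

section
/- Let F be a field of positive characteristic, g ∈ GL(d,F) of infinite order, and C the centralizer of g in GL(d,F). Then there exists a group homomorphism φ: C → F̄* (where F̄ is the algebraic closure of F) such that φ(g) has infinite order. -/
open Module Module.End Polynomial Finset

/-- If all eigenvalues of an endomorphism over an algebraically closed field of
characteristic `p` have finite multiplicative order, then the endomorphism has a power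
equal to the identity. -/
lemma aux_pow_eq_one_s9 {p : ℕ} [Fact p.Prime] (K : Type*) [Field K] [IsAlgClosed K] [CharP K p]
    {V : Type*} [AddCommGroup V] [Module K V] [FiniteDimensional K V]
    (A : Module.End K V) (hA : ∀ μ : K, A.HasEigenvalue μ → IsOfFinOrder μ) :
    ∃ m : ℕ, 0 < m ∧ A ^ m = 1 := by
  classical
  rcases subsingleton_or_nontrivial V with hV | hV
  · exact ⟨1, one_pos, Subsingleton.elim _ _⟩
  have hmin : minpoly K A ≠ 0 := minpoly.ne_zero (Algebra.IsIntegral.isIntegral A)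
  set N : ℕ := ∏ μ ∈ (minpoly K A).roots.toFinset, orderOf μ with hN
  have hNpos : 0 < N := by
    apply Finset.prod_pos
    intro μ hμ
    rw [Multiset.mem_toFinset, mem_roots hmin] at hμ
    exact (hA μ (Module.End.hasEigenvalue_iff_isRoot.mpr hμ)).orderOf_pos
  have hpowN : ∀ μ : K, A.HasEigenvalue μ → μ ^ N = 1 := by
    intro μ hμ
    refine orderOf_dvd_iff_pow_eq_one.mp (Finset.dvd_prod_of_mem _ ?_)
    rw [Multiset.mem_toFinset, mem_roots hmin]
    exact Module.End.hasEigenvalue_iff_isRoot.mp hμ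
  set n := finrank K V with hn
  have hnpos : 0 < n := finrank_pos
  have hnil : ((A ^ N - 1 : Module.End K V) ^ n) = 0 := by
    rw [← LinearMap.ker_eq_top, eq_top_iff, ← iSup_maxGenEigenspace_eq_top A]
    apply iSup_le
    intro μ
    by_cases hμ : A.maxGenEigenspace μ = ⊥
    · rw [hμ]; exact bot_le
    have hev : A.HasEigenvalue μ := by
      have hgen : A.HasGenEigenvalue μ n := by
        rw [Module.End.HasGenEigenvalue, Module.End.HasUnifEigenvalue]
        rwa [maxGenEigenspace_eq_genEigenspace_finrank] at hμ
      exact (hasGenEigenvalue_iff_hasEigenvalue hnpos).mp hgen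
    intro x hx
    rw [maxGenEigenspace_eq_genEigenspace_finrank, Module.End.mem_genEigenspace_nat,
      LinearMap.mem_ker] at hx
    set C : Module.End K V := A - μ • 1 with hC
    set S : Module.End K V := ∑ i ∈ Finset.range N, A ^ i * (μ • 1) ^ (N - 1 - i) with hS
    have hAc : Commute A ((μ : K) • (1 : Module.End K V)) :=
      Commute.smul_right (Commute.one_right A) μ
    have hfac : S * C = A ^ N - 1 := by
      rw [hS, hC, hAc.geom_sum₂_mul N, _root_.smul_pow, one_pow, hpowN μ hev, one_smul]
    have hSC : Commute S C := by
      apply Commute.sum_left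
      intro i _
      have h1 : Commute (A ^ i * (μ • 1) ^ (N - 1 - i)) A :=
        Commute.mul_left ((Commute.refl A).pow_left i)
          (Commute.pow_left ((Commute.one_left A).smul_left μ) _)
      have h2 : Commute (A ^ i * (μ • 1) ^ (N - 1 - i)) ((μ : K) • (1 : Module.End K V)) :=
        Commute.mul_left (Commute.pow_left hAc.symm.symm i |>.symm |>.symm |>.symm |>.symm)
          (Commute.pow_left (Commute.refl _) _)
      exact Commute.sub_right h1 h2
    have hfin : (A ^ N - 1 : Module.End K V) ^ n = S ^ n * C ^ n := by
      rw [← hfac, hSC.mul_pow]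
    rw [LinearMap.mem_ker, hfin, Module.End.mul_apply]
    rw [hx, map_zero]
  obtain ⟨k, hk⟩ : ∃ k : ℕ, n ≤ p ^ k :=
    ⟨n, le_of_lt (Nat.lt_pow_self (n := n) (Fact.out (p := p.Prime)).one_lt)⟩
  have hntK : Nontrivial (Module.End K V) := by
    obtain ⟨x, hx⟩ := exists_ne (0 : V)
    exact nontrivial_of_ne 1 0 fun h => hx (by simpa using LinearMap.congr_fun h x)
  have hCharP : CharP (Module.End K V) p :=
    charP_of_injective_algebraMap (algebraMap K (Module.End K V)).injective p
  refine ⟨N * p ^ k, Nat.mul_pos hNpos (pow_pos (Fact.out (p := p.Prime)).pos k), ?_⟩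
  have h1 : (A ^ N : Module.End K V) = 1 + (A ^ N - 1) := by abel
  rw [pow_mul, h1, add_pow_char_pow_of_commute p k (Commute.one_left _), one_pow,
    pow_eq_zero_of_le hk hnil, add_zero]

theorem stmt_9 (F : Type*) [Field F] (p : ℕ) [CharP F p] (hp : 0 < p)
    (d : ℕ) (g : GL (Fin d) F) (hg : ¬ IsOfFinOrder g)
    (hmem : g ∈ Subgroup.centralizer ({g} : Set (GL (Fin d) F))) :
    ∃ φ : Subgroup.centralizer ({g} : Set (GL (Fin d) F)) →* (AlgebraicClosure F)ˣ,
      ¬ IsOfFinOrder (φ ⟨g, hmem⟩) := by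
  haveI : Fact p.Prime := ⟨CharP.char_prime_of_ne_zero F hp.ne'⟩
  haveI : CharP (AlgebraicClosure F) p :=
    charP_of_injective_algebraMap (algebraMap F (AlgebraicClosure F)).injective p
  set K := AlgebraicClosure F with hK
  let ψ : Matrix (Fin d) (Fin d) F →+* Module.End K (Fin d → K) :=
    ((Matrix.toLinAlgEquiv' : Matrix (Fin d) (Fin d) K ≃ₐ[K] _).toRingEquiv.toRingHom).comp
      ((algebraMap F K).mapMatrix)
  have hψ : Function.Injective ψ := by
    intro a b h
    have h2 := Matrix.toLinAlgEquiv'.toRingEquiv.injective h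
    exact Matrix.map_injective (algebraMap F K).injective h2
  set A : Module.End K (Fin d → K) := ψ (g : Matrix (Fin d) (Fin d) F) with hAdef
  have hA : ¬ ∀ μ : K, A.HasEigenvalue μ → IsOfFinOrder μ := by
    intro h
    obtain ⟨m, hm, hAm⟩ := aux_pow_eq_one_s9 (p := p) K A h
    apply hg
    refine isOfFinOrder_iff_pow_eq_one.mpr ⟨m, hm, ?_⟩
    apply Units.ext
    apply hψ
    rw [Units.val_pow_eq_pow_val, map_pow, ← hAdef, hAm, Units.val_one, map_one]
  push_neg at hA
  obtain ⟨μ, hev, hμfin⟩ := hA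
  -- the centralizer acts on the eigenspace
  have hcomm : ∀ x : Subgroup.centralizer ({g} : Set (GL (Fin d) F)),
      Commute A (ψ ((x : GL (Fin d) F) : Matrix (Fin d) (Fin d) F)) := by
    intro x
    have hx := x.2
    rw [Subgroup.mem_centralizer_iff] at hx
    have h1 : g * (x : GL (Fin d) F) = (x : GL (Fin d) F) * g := hx g (Set.mem_singleton g)
    have h2 : (g : Matrix (Fin d) (Fin d) F) * ((x : GL (Fin d) F) : Matrix (Fin d) (Fin d) F)
        = ((x : GL (Fin d) F) : Matrix (Fin d) (Fin d) F) * (g : Matrix (Fin d) (Fin d) F) := by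
      exact_mod_cast congrArg Units.val h1
    show A * _ = _ * A
    rw [hAdef, ← map_mul, ← map_mul, h2]
  have hmap : ∀ x : Subgroup.centralizer ({g} : Set (GL (Fin d) F)),
      ∀ v ∈ A.eigenspace μ,
        (ψ ((x : GL (Fin d) F) : Matrix (Fin d) (Fin d) F)) v ∈ A.eigenspace μ := by
    intro x v hv
    rw [Module.End.mem_eigenspace_iff] at hv ⊢
    have hc := LinearMap.congr_fun (hcomm x).eq v
    rw [Module.End.mul_apply, Module.End.mul_apply] at hc
    rw [hc, hv, map_smul]
  let φ₀ : Subgroup.centralizer ({g} : Set (GL (Fin d) F)) →* K :=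
  { toFun := fun x =>
      LinearMap.det ((ψ ((x : GL (Fin d) F) : Matrix (Fin d) (Fin d) F)).restrict (hmap x)),
    map_one' := by
      have h1 : (ψ (((1 : Subgroup.centralizer ({g} : Set (GL (Fin d) F))) :
          GL (Fin d) F) : Matrix (Fin d) (Fin d) F)).restrict (hmap 1) = LinearMap.id := by
        apply LinearMap.ext
        intro v
        apply Subtype.ext
        simp [LinearMap.restrict_coe_apply]
      rw [h1, LinearMap.det_id]
    map_mul' := fun x y => by
      rw [← LinearMap.det_comp]
      congr 1
      apply LinearMap.ext
      intro v
      apply Subtype.ext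
      simp [LinearMap.restrict_coe_apply, Units.val_mul, map_mul, Module.End.mul_apply] }
  refine ⟨φ₀.toHomUnits, ?_⟩
  intro hfin
  obtain ⟨m, hm, hpow⟩ := isOfFinOrder_iff_pow_eq_one.mp hfin
  apply hμfin
  set r := finrank K (A.eigenspace μ) with hr
  have hrpos : 0 < r := by
    haveI : Nontrivial (A.eigenspace μ) := Submodule.nontrivial_iff_ne_bot.mpr hev
    exact finrank_pos
  have hval : (φ₀.toHomUnits ⟨g, hmem⟩ : K) = μ ^ r := by
    rw [MonoidHom.coe_toHomUnits]
    show LinearMap.det ((ψ ((g : GL (Fin d) F) : Matrix (Fin d) (Fin d) F)).restrict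
      (hmap ⟨g, hmem⟩)) = μ ^ r
    have hres : (ψ ((g : GL (Fin d) F) : Matrix (Fin d) (Fin d) F)).restrict (hmap ⟨g, hmem⟩)
        = (μ • LinearMap.id : A.eigenspace μ →ₗ[K] A.eigenspace μ) := by
      refine LinearMap.ext fun v => Subtype.ext ?_
      have hv := v.2
      rw [Module.End.mem_eigenspace_iff] at hv
      simpa [LinearMap.restrict_coe_apply, ← hAdef] using hv
    rw [hres, LinearMap.det_smul, LinearMap.det_id, mul_one, hr]
  refine isOfFinOrder_iff_pow_eq_one.mpr ⟨r * m, by positivity, ?_⟩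
  have h2 : ((φ₀.toHomUnits ⟨g, hmem⟩ : Kˣ) ^ m : Kˣ) = 1 := hpow
  have h3 : ((φ₀.toHomUnits ⟨g, hmem⟩ : K)) ^ m = 1 := by
    rw [← Units.val_pow_eq_pow_val, h2, Units.val_one]
  rw [pow_mul, ← hval, h3]
end

section
/- A finitely generated group that is linear over some field of positive characteristic cannot contain an infinite-order element g together with a finite-index subgroup H of C_G(g) containing g such that every homomorphism from C_G(g) to an abelian group kills some power of g. -/
open Polynomial

lemma aux_root {K : Type*} [Field K] [IsAlgClosed K] {p : ℕ} [CharP K p] [Fact p.Prime]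
    {V : Type*} [AddCommGroup V] [Module K V] [FiniteDimensional K V]
    (u : (Module.End K V)ˣ) (hu : ¬ IsOfFinOrder u) :
    ∃ μ : K, ¬ IsOfFinOrder μ ∧ (minpoly K (u : Module.End K V)).IsRoot μ := by
  by_contra hcon
  push_neg at hcon
  classical
  set f : Module.End K V := (u : Module.End K V) with hf
  have hint : IsIntegral K f := Algebra.IsIntegral.isIntegral f
  set ν : K[X] := minpoly K f with hν
  have hν0 : ν ≠ 0 := minpoly.ne_zero hint
  have hmon : ν.Monic := minpoly.monic hint
  have hroots : ∀ μ ∈ ν.roots, IsOfFinOrder μ := by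
    intro μ hμ
    by_contra hfo
    exact hcon μ hfo (isRoot_of_mem_roots hμ)
  set N : ℕ := (ν.roots.map orderOf).prod with hN
  have hNpos : 0 < N := by
    rcases Nat.eq_zero_or_pos N with h0 | h
    · exfalso
      rw [hN, Multiset.prod_eq_zero_iff] at h0
      obtain ⟨μ, hμ, h0'⟩ := Multiset.mem_map.mp h0
      exact (hroots μ hμ).orderOf_pos.ne' h0'
    · exact h
  have hpow : ∀ μ ∈ ν.roots, μ ^ N = 1 := by
    intro μ hμ
    exact orderOf_dvd_iff_pow_eq_one.mp (Multiset.dvd_prod (Multiset.mem_map_of_mem orderOf hμ))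
  set D := ν.natDegree with hD
  set P := p ^ D with hP
  have hcount : ∀ μ, ν.roots.count μ ≤ P := by
    intro μ
    calc ν.roots.count μ ≤ Multiset.card ν.roots := Multiset.count_le_card _ _
    _ ≤ D := Polynomial.card_roots' ν
    _ ≤ P := le_of_lt (Nat.lt_pow_self (Fact.out : p.Prime).one_lt)
  have hXN0 : (X ^ N - 1 : K[X]) ≠ 0 := by
    intro h
    have := congrArg (eval 0) h
    simp [zero_pow hNpos.ne'] at this
  have hq : (ν.roots.toFinset.1.map fun a => X - C a).prod ∣ (X ^ N - 1 : K[X]) := by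
    rw [Multiset.prod_X_sub_C_dvd_iff_le_roots hXN0]
    rw [Multiset.le_iff_count]
    intro μ
    rw [Multiset.toFinset_val, Multiset.count_dedup]
    split_ifs with hmem
    · rw [count_roots]
      exact (Polynomial.rootMultiplicity_pos hXN0).mpr
        (by simp [Polynomial.IsRoot, hpow μ hmem])
    · exact Nat.zero_le _
  have hdvd : ν ∣ (X ^ N - 1 : K[X]) ^ P := by
    have h1 : ν = ∏ μ ∈ ν.roots.toFinset, (X - C μ) ^ ν.roots.count μ := by
      conv_lhs => rw [Splits.eq_prod_roots_of_monic (IsAlgClosed.splits ν) hmon]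
      exact Finset.prod_multiset_map_count _ _
    have h2 : ν ∣ ∏ μ ∈ ν.roots.toFinset, (X - C μ) ^ P := by
      conv_lhs => rw [h1]
      exact Finset.prod_dvd_prod_of_dvd (fun μ => (X - C μ) ^ ν.roots.count μ)
        (fun μ => (X - C μ) ^ P) fun μ _ => pow_dvd_pow _ (hcount μ)
    refine h2.trans ?_
    have h3 : (∏ μ ∈ ν.roots.toFinset, (X - C μ) ^ P)
        = (∏ μ ∈ ν.roots.toFinset, (X - C μ)) ^ P := Finset.prod_pow _ _ _
    rw [h3]
    exact pow_dvd_pow_of_dvd (by rw [Finset.prod_eq_multiset_prod]; exact hq) P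
  obtain ⟨c, hc⟩ := hdvd
  have hfpow : f ^ (N * P) = 1 := by
    have h0 : Polynomial.aeval f ((X ^ N - 1 : K[X]) ^ P) = 0 := by
      rw [hc, map_mul, minpoly.aeval, zero_mul]
    have h1 : ((X ^ N - 1 : K[X]) ^ P) = X ^ (N * P) - 1 := by
      rw [hP, sub_pow_char_pow, one_pow, ← pow_mul]
    rw [h1] at h0
    have h2 : f ^ (N * P) - 1 = 0 := by simpa using h0
    rw [sub_eq_zero] at h2; exact h2
  exact hu (isOfFinOrder_iff_pow_eq_one.mpr ⟨N * P, Nat.mul_pos hNpos (pow_pos (Nat.Prime.pos Fact.out) D), Units.ext (by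
    rw [Units.val_pow_eq_pow_val, Units.val_one]; exact hfpow)⟩)

theorem stmt_16 (G : Type*) [Group G] (hFG : Group.FG G)
    (F : Type*) [Field F] (p : ℕ) [CharP F p] (hp : 0 < p)
    (d : ℕ) (ρ : G →* GL (Fin d) F) (hρ : Function.Injective ρ) :
    ¬ ∃ (g : G) (hmem : g ∈ Subgroup.centralizer ({g} : Set G)),
        ¬ IsOfFinOrder g ∧
        ∃ H : Subgroup (Subgroup.centralizer ({g} : Set G)),
          H.FiniteIndex ∧
          (⟨g, hmem⟩ : Subgroup.centralizer ({g} : Set G)) ∈ H ∧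
          ∀ (A : Type) [CommGroup A]
            (φ : Subgroup.centralizer ({g} : Set G) →* A),
            ∃ m : ℕ, 1 ≤ m ∧ φ (⟨g, hmem⟩ ^ m) = 1 := by
  rintro ⟨g, hmem, hginf, H, hHfi, hgH, hkill⟩
  classical
  haveI : NeZero p := ⟨hp.ne'⟩
  haveI : Fact p.Prime := CharP.char_is_prime_of_pos F p
  let K := AlgebraicClosure F
  let V : Type _ := Fin d → K
  let e : Matrix (Fin d) (Fin d) K ≃ₐ[K] Module.End K V := Matrix.toLinAlgEquiv'
  let j : Matrix (Fin d) (Fin d) F →+* Matrix (Fin d) (Fin d) K :=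
    (algebraMap F K).mapMatrix
  let ω : G →* (Module.End K V)ˣ :=
    (Units.map e.toRingEquiv.toRingHom.toMonoidHom).comp
      ((Units.map j.toMonoidHom).comp ρ)
  have hωinj : Function.Injective ω := by
    refine (Units.map_injective ?_).comp ((Units.map_injective ?_).comp hρ)
    · exact e.injective
    · intro M N h
      ext i k
      have := congrArg (fun M => M i k) h
      exact (algebraMap F K).injective this
  set u : (Module.End K V)ˣ := ω g with hu_def
  have hu : ¬ IsOfFinOrder u := by
    intro h
    obtain ⟨n, hn, h1⟩ := isOfFinOrder_iff_pow_eq_one.mp h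
    exact hginf (isOfFinOrder_iff_pow_eq_one.mpr ⟨n, hn, hωinj (by rw [map_pow, h1, map_one])⟩)
  obtain ⟨μ, hμinf, hμroot⟩ := aux_root (p := p) u hu
  set f : Module.End K V := (u : Module.End K V) with hf_def
  have hev : f.HasEigenvalue μ := Module.End.hasEigenvalue_of_isRoot hμroot
  set E : Submodule K V := f.eigenspace μ with hE_def
  haveI : Nontrivial E := Submodule.nontrivial_iff_ne_bot.mpr hev
  have hinv : ∀ x : Subgroup.centralizer ({g} : Set G), ∀ v ∈ E, ((ω x.1 : Module.End K V)) v ∈ E := by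
    intro x v hv
    have hc : g * x.1 = x.1 * g := x.2 g (Set.mem_singleton g)
    have hcomm : f * (ω x.1 : Module.End K V) = (ω x.1 : Module.End K V) * f := by
      have : ω g * ω x.1 = ω x.1 * ω g := by rw [← map_mul, ← map_mul, hc]
      have := congrArg Units.val this
      simpa [Units.val_mul] using this
    rw [Module.End.mem_eigenspace_iff] at hv ⊢
    have h2 := congrArg (fun T : Module.End K V => T v) hcomm
    simp only [Module.End.mul_apply] at h2
    rw [h2, hv, map_smul]
  let Φ : Subgroup.centralizer ({g} : Set G) →* K :=
    { toFun := fun x => LinearMap.det (((ω x.1 : Module.End K V)).restrict (hinv x)),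
      map_one' := by
        show LinearMap.det (((ω ((1 : Subgroup.centralizer ({g} : Set G)).1) : Module.End K V)).restrict
          (hinv 1)) = 1
        have h1 : ((ω ((1 : Subgroup.centralizer ({g} : Set G)).1) : Module.End K V)).restrict
            (hinv 1) = LinearMap.id := by
          ext v
          simp [LinearMap.restrict_apply]
        rw [h1, LinearMap.det_id]
      map_mul' := by
        intro x y
        show LinearMap.det (((ω ((x * y).1) : Module.End K V)).restrict (hinv (x * y)))
          = LinearMap.det (((ω x.1 : Module.End K V)).restrict (hinv x))
            * LinearMap.det (((ω y.1 : Module.End K V)).restrict (hinv y))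
        have h1 : ((ω ((x * y).1) : Module.End K V)).restrict (hinv (x * y))
            = (((ω x.1 : Module.End K V)).restrict (hinv x)).comp
              (((ω y.1 : Module.End K V)).restrict (hinv y)) := by
          ext v
          simp [LinearMap.restrict_apply, Module.End.mul_apply]
        rw [h1, LinearMap.det_comp] }
  let φ₀ := Φ.toHomUnits
  set r := Module.finrank K E with hr_def
  have hrpos : 0 < r := Module.finrank_pos
  have hval : ((φ₀ ⟨g, hmem⟩ : Kˣ) : K) = μ ^ r := by
    have h1 : ((ω g : Module.End K V)).restrict (hinv ⟨g, hmem⟩)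
        = (μ • LinearMap.id : E →ₗ[K] E) := by
      ext v
      have hv' : f ↑v = μ • (v : V) := Module.End.mem_eigenspace_iff.mp v.2
      simp [LinearMap.restrict_apply, hv']
      exact congrFun hv' _
    show Φ ⟨g, hmem⟩ = μ ^ r
    show LinearMap.det (((ω g : Module.End K V)).restrict (hinv ⟨g, hmem⟩)) = μ ^ r
    rw [h1, LinearMap.det_smul, LinearMap.det_id, mul_one]
  have hφg : ¬ IsOfFinOrder (φ₀ ⟨g, hmem⟩) := by
    intro h
    obtain ⟨n, hn, h1⟩ := isOfFinOrder_iff_pow_eq_one.mp h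
    apply hμinf
    refine isOfFinOrder_iff_pow_eq_one.mpr ⟨r * n, Nat.mul_pos hrpos hn, ?_⟩
    have h2 := congrArg Units.val h1
    rw [Units.val_pow_eq_pow_val, hval, Units.val_one, ← pow_mul] at h2
    exact h2
  set a : Additive Kˣ := Additive.ofMul (φ₀ ⟨g, hmem⟩) with ha_def
  let ℓ : ℤ →ₗ[ℤ] Additive Kˣ := LinearMap.toSpanSingleton ℤ _ a
  have hℓ : Function.Injective ℓ := by
    have h2 : Function.Injective (fun n : ℤ => (φ₀ ⟨g, hmem⟩) ^ n) :=
      injective_zpow_iff_not_isOfFinOrder.mpr hφg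
    intro m n hmn
    apply h2
    have hm : ℓ m = Additive.ofMul ((φ₀ ⟨g, hmem⟩) ^ m) := by
      rw [LinearMap.toSpanSingleton_apply, ha_def, ← ofMul_zpow]
    have hn' : ℓ n = Additive.ofMul ((φ₀ ⟨g, hmem⟩) ^ n) := by
      rw [LinearMap.toSpanSingleton_apply, ha_def, ← ofMul_zpow]
    rw [hm, hn'] at hmn
    exact Additive.ofMul.injective hmn
  obtain ⟨χ, hχ⟩ := (Module.Baer.of_divisible ℚ).extension_property
    ℓ hℓ (Algebra.linearMap ℤ ℚ)
  have hχa : χ a = 1 := by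
    have h0 := congrArg (fun T : ℤ →ₗ[ℤ] ℚ => T 1) hχ
    simp only [LinearMap.comp_apply] at h0
    have h1 : ℓ 1 = a := by rw [LinearMap.toSpanSingleton_apply, one_smul]
    rw [h1] at h0
    simpa using h0
  let φ : Subgroup.centralizer ({g} : Set G) →* Multiplicative ℚ :=
    MonoidHom.mk' (fun x => Multiplicative.ofAdd (χ (Additive.ofMul (φ₀ x)))) (by
      intro x y
      show Multiplicative.ofAdd (χ (Additive.ofMul (φ₀ (x * y)))) =
        Multiplicative.ofAdd (χ (Additive.ofMul (φ₀ x)))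
          * Multiplicative.ofAdd (χ (Additive.ofMul (φ₀ y)))
      rw [map_mul, ← ofAdd_add, ← map_add]
      rfl)
  obtain ⟨m, hm, hφm⟩ := hkill (Multiplicative ℚ) φ
  have hcomp : φ (⟨g, hmem⟩ ^ m) = Multiplicative.ofAdd ((m : ℚ)) := by
    show Multiplicative.ofAdd (χ (Additive.ofMul (φ₀ (⟨g, hmem⟩ ^ m)))) = _
    rw [map_pow]
    have h1 : Additive.ofMul ((φ₀ ⟨g, hmem⟩) ^ m) = m • a := by
      rw [ha_def, ofMul_pow]
    rw [h1, map_nsmul, hχa]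
    norm_num
  rw [hcomp] at hφm
  have : (m : ℚ) = 0 := by
    have := congrArg Multiplicative.toAdd hφm
    simpa using this
  have : m = 0 := by exact_mod_cast this
  omega
end
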